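/- Let 𝒮 be an IP family of finite subsets of ℕ and let c : NU(𝒮) → Fin r. Then either (1) there is an IP family 𝒮' ⊆ 𝒮 and a color i such that c(S) ≠ i for every S ∈ NU(𝒮'), or (2) there is a finite collection ℬ ⊆ NU(𝒮) and an IP family 𝒯 ⊆ 𝒮 − ℬ such that for every T ∈ NU(𝒯) there is B ∈ ℬ with B ∩ T = ∅ and c(T) = c(B) = c(B ∪ T). -/

import Mathlib

/-- The set of nonempty unions of finitely many members of `𝒮`. -/
def NU (𝒮 : Set (Finset ℕ)) : Set (Finset ℕ) :=
  {T | T.Nonempty ∧ ∃ F : Finset (Finset ℕ), ↑F ⊆ 𝒮 ∧ T = F.sup id}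

/-- `𝒮` is an IP family: closed under finite unions and containing an infinite
pairwise disjoint subfamily. -/
def IsIP (𝒮 : Set (Finset ℕ)) : Prop :=
  (∀ A ∈ 𝒮, ∀ B ∈ 𝒮, A ∪ B ∈ 𝒮) ∧
    ∃ 𝒟 ⊆ 𝒮, 𝒟.Infinite ∧ 𝒟.Pairwise Disjoint

/-- `𝒮` generates an IP set: it contains infinitely many pairwise disjoint elements. -/
def GeneratesIP (𝒮 : Set (Finset ℕ)) : Prop :=
  ∃ 𝒟 ⊆ 𝒮, 𝒟.Infinite ∧ 𝒟.Pairwise Disjoint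

/-- `𝒮 − ℬ`: the members of `𝒮` disjoint from every member of `ℬ`. -/
def SMinus (𝒮 ℬ : Set (Finset ℕ)) : Set (Finset ℕ) :=
  {T ∈ 𝒮 | ∀ B ∈ ℬ, Disjoint T B}

/-- `𝒟` half-matches `B` with respect to the coloring `c`. -/
def HalfMatch {α : Type*} (c : Finset ℕ → α) (𝒟 : Set (Finset ℕ)) (B : Finset ℕ) : Prop :=
  ∃ D ∈ 𝒟, Disjoint D B ∧ c B = c (D ∪ B)

/-- `𝒟` full-matches `B` with respect to the coloring `c`. -/
def FullMatch {α : Type*} (c : Finset ℕ → α) (𝒟 : Set (Finset ℕ)) (B : Finset ℕ) : Prop :=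
  ∃ D ∈ 𝒟, Disjoint D B ∧ c D = c B ∧ c B = c (D ∪ B)

/-! ### Auxiliary material -/

/-- The semigroup of finite sets under disjoint union, with an absorbing junk element `none`. -/
abbrev MU : Type := Option (Finset ℕ)

instance : Mul MU :=
  ⟨fun x y => x.bind fun a => y.bind fun b => if Disjoint a b then some (a ∪ b) else none⟩

lemma MU.some_mul_some (a b : Finset ℕ) :
    (some a : MU) * some b = if Disjoint a b then some (a ∪ b) else none := rfl

lemma MU.none_mul (x : MU) : (none : MU) * x = none := rfl

lemma MU.mul_none (x : MU) : x * (none : MU) = none := by cases x <;> rfl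

instance : Semigroup MU where
  mul_assoc := by
    have hsome : ∀ a b c : Finset ℕ,
        ((some a : MU) * some b) * some c = some a * (some b * some c) := by
      intro a b c
      by_cases hab : Disjoint a b <;> by_cases hbc : Disjoint b c <;>
        by_cases hac : Disjoint a c <;>
        simp [MU.some_mul_some, MU.none_mul, MU.mul_none, hab, hbc, hac,
          Finset.disjoint_union_left, Finset.disjoint_union_right, Finset.union_assoc]
    rintro (_ | a) (_ | b) (_ | c) <;>
      (try simp only [MU.none_mul, MU.mul_none]) <;> first | rfl | exact hsome a b c

lemma sup_mem_of_closed {𝒮 : Set (Finset ℕ)}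
    (hcl : ∀ A ∈ 𝒮, ∀ B ∈ 𝒮, A ∪ B ∈ 𝒮) {ι : Type*} [DecidableEq ι] (f : ι → Finset ℕ) :
    ∀ s : Finset ι, s.Nonempty → (∀ i ∈ s, f i ∈ 𝒮) → s.sup f ∈ 𝒮 := by
  intro s
  induction s using Finset.induction_on with
  | empty => rintro ⟨x, hx⟩; cases hx
  | @insert a s ha ih =>
    intro _ hsub
    rw [Finset.sup_insert]
    rcases s.eq_empty_or_nonempty with rfl | hs
    · simpa using hsub a (Finset.mem_insert_self _ _)
    · have h1 : f a ∈ 𝒮 := hsub a (Finset.mem_insert_self _ _)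
      have h2 : s.sup f ∈ 𝒮 := ih hs fun i hi => hsub i (Finset.mem_insert_of_mem hi)
      simpa using hcl _ h1 _ h2

lemma NU_subset_of_closed {𝒮 : Set (Finset ℕ)}
    (hcl : ∀ A ∈ 𝒮, ∀ B ∈ 𝒮, A ∪ B ∈ 𝒮) : NU 𝒮 ⊆ 𝒮 := by
  rintro T ⟨hTne, F, hF, rfl⟩
  rcases F.eq_empty_or_nonempty with rfl | hFne
  · simp at hTne
  · exact sup_mem_of_closed hcl id F hFne fun i hi => hF hi

/-- Every finite product in the stream `i ↦ some (D (f i))` (with `D` pairwise disjoint and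
`f` injective) is `some` of a finite union of the `D`'s. -/
lemma FP_good {D : ℕ → Finset ℕ} (hD : ∀ i k, i ≠ k → Disjoint (D i) (D k))
    {g : Stream' MU} {m : MU} (hm : m ∈ Hindman.FP g) :
    ∀ f : ℕ → ℕ, Function.Injective f → (∀ i, g.get i = some (D (f i))) →
      ∃ s : Finset ℕ, s.Nonempty ∧ (∀ j ∈ s, ∃ i, f i = j) ∧ m = some (s.sup D) := by
  induction hm with
  | head' a =>
    intro f hf hg
    refine ⟨{f 0}, Finset.singleton_nonempty _, ?_, ?_⟩
    · intro j hj; exact ⟨0, (Finset.mem_singleton.mp hj).symm⟩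
    · have : a.head = a.get 0 := rfl
      rw [this, hg 0, Finset.sup_singleton]
  | tail' a m h ih =>
    intro f hf hg
    obtain ⟨s, hne, hmem, heq⟩ := ih (fun i => f (i + 1))
      (fun x y hxy => Nat.succ_injective (hf hxy))
      (fun i => by rw [Stream'.get_tail]; exact hg (i + 1))
    exact ⟨s, hne, fun j hj => (hmem j hj).elim fun i hi => ⟨i + 1, hi⟩, heq⟩
  | cons' a m h ih =>
    intro f hf hg
    obtain ⟨s, hne, hmem, rfl⟩ := ih (fun i => f (i + 1))
      (fun x y hxy => Nat.succ_injective (hf hxy))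
      (fun i => by rw [Stream'.get_tail]; exact hg (i + 1))
    have hnot : ∀ j ∈ s, j ≠ f 0 := by
      intro j hj hj0
      obtain ⟨i, hi⟩ := hmem j hj
      have : f (i + 1) = f 0 := by rw [hi, hj0]
      exact Nat.succ_ne_zero i (hf this)
    have hd : Disjoint (D (f 0)) (s.sup D) :=
      Finset.disjoint_sup_right.mpr fun j hj => hD _ _ fun e => hnot j hj e.symm
    have hf0 : f 0 ∉ s := fun hmem0 => hnot _ hmem0 rfl
    refine ⟨insert (f 0) s, Finset.insert_nonempty _ _, ?_, ?_⟩
    · intro j hj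
      rcases Finset.mem_insert.mp hj with rfl | hj
      · exact ⟨0, rfl⟩
      · exact (hmem j hj).elim fun i hi => ⟨i + 1, hi⟩
    · have hhead : a.head = some (D (f 0)) := hg 0
      rw [hhead, MU.some_mul_some, if_pos hd, Finset.sup_insert]
      rfl

/-- Unions over arbitrary nonempty finite index sets are finite products. -/
lemma sup_mem_FP (g : Stream' MU) (X : ℕ → Finset ℕ)
    (hg : ∀ i, g.get i = some (X i))
    (hdisj : ∀ i k, i ≠ k → Disjoint (X i) (X k)) :
    ∀ I : Finset ℕ, I.Nonempty → (some (I.sup X) : MU) ∈ Hindman.FP g := by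
  suffices h : ∀ (k n : ℕ) (I : Finset ℕ), I.card ≤ k → I.Nonempty → (∀ i ∈ I, n ≤ i) →
      (some (I.sup X) : MU) ∈ Hindman.FP (Stream'.drop n g) by
    intro I hI
    exact h I.card 0 I le_rfl hI (fun i _ => Nat.zero_le i)
  intro k
  induction k with
  | zero =>
    intro n I hcard hne _
    have hpos := Finset.card_pos.mpr hne
    omega
  | succ k ih =>
    intro n I hcard hne hlb
    set i₀ := I.min' hne with hi₀
    have hi₀I : i₀ ∈ I := I.min'_mem hne
    have hni₀ : n ≤ i₀ := hlb _ hi₀I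
    have hsub : Hindman.FP (Stream'.drop i₀ g) ⊆ Hindman.FP (Stream'.drop n g) := by
      have hdd : Stream'.drop (i₀ - n) (Stream'.drop n g) = Stream'.drop i₀ g := by
        have hnn : i₀ - n + n = i₀ := by omega
        rw [Stream'.drop_drop, Nat.add_comm, hnn]
      rw [← hdd]
      exact Hindman.FP_drop_subset_FP _ _
    apply hsub
    rcases (I.erase i₀).eq_empty_or_nonempty with hJ | hJ
    · have hI1 : I = {i₀} := by
        apply Finset.eq_singleton_iff_unique_mem.mpr
        refine ⟨hi₀I, fun x hx => ?_⟩
        by_contra hne'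
        exact (Finset.ne_empty_of_mem (Finset.mem_erase.mpr ⟨hne', hx⟩)) hJ
      rw [hI1, Finset.sup_singleton]
      have hh : (Stream'.drop i₀ g).head = some (X i₀) := by
        rw [Stream'.head_drop, hg i₀]
      exact hh ▸ Hindman.FP.head _
    · set J := I.erase i₀ with hJdef
      have hJlb : ∀ i ∈ J, i₀ + 1 ≤ i := fun i hi =>
        Nat.succ_le_of_lt (I.min'_lt_of_mem_erase_min' hne hi)
      have hJcard : J.card ≤ k := by
        have h1 : J.card = I.card - 1 := Finset.card_erase_of_mem hi₀I
        have h2 : 0 < I.card := Finset.card_pos.mpr hne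
        omega
      have hJmem := ih (i₀ + 1) J hJcard hJ hJlb
      have htail : (Stream'.drop i₀ g).tail = Stream'.drop (i₀ + 1) g := by
        rw [Stream'.tail_eq_drop, Stream'.drop_drop, Nat.add_comm]
      have hcons := Hindman.FP.cons (Stream'.drop i₀ g) _ (htail ▸ hJmem)
      have hd : Disjoint (X i₀) (J.sup X) :=
        Finset.disjoint_sup_right.mpr fun i hi =>
          hdisj _ _ (fun e => (Finset.ne_of_mem_erase hi) e.symm)
      have hprod : (Stream'.drop i₀ g).head * (some (J.sup X) : MU) = some (I.sup X) := by
        rw [Stream'.head_drop, hg i₀, MU.some_mul_some, if_pos hd]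
        have : I.sup X = X i₀ ⊔ J.sup X := by
          conv_lhs => rw [← Finset.insert_erase hi₀I]
          rw [Finset.sup_insert]
        rw [this]; rfl
      rwa [hprod] at hcons

/-- In a pairwise disjoint family, only finitely many members meet a fixed finite set. -/
lemma finite_meets (𝒟 : Set (Finset ℕ)) (hpd : 𝒟.Pairwise Disjoint) (B : Finset ℕ) :
    {E ∈ 𝒟 | ¬ Disjoint E B}.Finite := by
  classical
  have hpt : ∀ E ∈ {E ∈ 𝒟 | ¬ Disjoint E B}, ∃ x, x ∈ E ∧ x ∈ B := fun E hE =>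
    Finset.not_disjoint_iff.mp hE.2
  choose! φ hφ1 hφ2 using hpt
  apply Set.Finite.of_finite_image (f := φ)
  · apply B.finite_toSet.subset
    rintro x ⟨E, hE, rfl⟩
    exact hφ2 E hE
  · intro E1 h1 E2 h2 heq
    by_contra hne
    have hd : Disjoint E1 E2 := hpd h1.1 h2.1 hne
    have h2' : φ E1 ∈ E2 := by rw [heq]; exact hφ1 E2 h2
    exact Finset.disjoint_left.mp hd (hφ1 E1 h1) h2'

/-- The full-matching dichotomy: either some color is avoided on an IP subfamily, or
some finite collection full-matches an IP family. -/
theorem full_match_maybe (r : ℕ) (𝒮 : Set (Finset ℕ)) (hS : IsIP 𝒮)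
    (c : Finset ℕ → Fin r) :
    (∃ 𝒮' ⊆ 𝒮, IsIP 𝒮' ∧ ∃ i : Fin r, ∀ S ∈ NU 𝒮', c S ≠ i) ∨
    (∃ ℬ : Finset (Finset ℕ), ↑ℬ ⊆ NU 𝒮 ∧
      ∃ 𝒯 ⊆ SMinus 𝒮 ↑ℬ, IsIP 𝒯 ∧
        ∀ T ∈ NU 𝒯, ∃ B ∈ ℬ, Disjoint B T ∧ c T = c B ∧ c T = c (B ∪ T)) := by
  classical
  obtain ⟨hcl, 𝒟₀, hD0S, hD0inf, hD0pd⟩ := hS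
  have hDinf : (𝒟₀ \ {∅}).Infinite := hD0inf.diff (Set.finite_singleton _)
  rcases r with _ | _ | r
  · exact (c ∅).elim0
  · -- one color: the trivial full match
    right
    obtain ⟨B, hB⟩ : (𝒟₀ \ {∅}).Nonempty := hDinf.nonempty
    have hBS : B ∈ 𝒮 := hD0S hB.1
    have hBne : B.Nonempty := Finset.nonempty_iff_ne_empty.mpr hB.2
    refine ⟨{B}, ?_, {S | S ∈ 𝒮 ∧ Disjoint S B}, ?_, ⟨?_, ?_⟩, ?_⟩
    · intro x hx
      simp only [Finset.coe_singleton, Set.mem_singleton_iff] at hx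
      rw [hx]
      exact ⟨hBne, ({B} : Finset (Finset ℕ)), by simpa using hBS, by simp⟩
    · rintro S ⟨hS1, hS2⟩
      refine ⟨hS1, ?_⟩
      intro B' hB'
      simp only [Finset.coe_singleton, Set.mem_singleton_iff] at hB'
      subst hB'; exact hS2
    · rintro A ⟨hA1, hA2⟩ B' ⟨hB1, hB2⟩
      exact ⟨hcl _ hA1 _ hB1, Finset.disjoint_union_left.mpr ⟨hA2, hB2⟩⟩
    · refine ⟨𝒟₀ \ {E ∈ 𝒟₀ | ¬ Disjoint E B}, ?_, ?_, ?_⟩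
      · rintro E ⟨hE1, hE2⟩
        refine ⟨hD0S hE1, ?_⟩
        by_contra hnd
        exact hE2 ⟨hE1, hnd⟩
      · exact hD0inf.diff (finite_meets 𝒟₀ hD0pd B)
      · exact hD0pd.mono Set.diff_subset
    · intro T hT
      have hTcl : T ∈ {S | S ∈ 𝒮 ∧ Disjoint S B} := by
        refine NU_subset_of_closed ?_ hT
        rintro A ⟨hA1, hA2⟩ B' ⟨hB1, hB2⟩
        exact ⟨hcl _ hA1 _ hB1, Finset.disjoint_union_left.mpr ⟨hA2, hB2⟩⟩
      have hone : ∀ u v : Fin (0 + 1), u = v := by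
        intro u v
        have hu := u.isLt
        have hv := v.isLt
        exact Fin.ext (by omega)
      exact ⟨B, Finset.mem_singleton_self B, hTcl.2.symm, hone _ _, hone _ _⟩
  · -- at least two colors: Hindman gives a monochromatic IP subfamily, so some color is avoided
    left
    set 𝒟 := 𝒟₀ \ {∅} with h𝒟
    let e := hDinf.natEmbedding
    set D : ℕ → Finset ℕ := fun i => (e i : Finset ℕ) with hD
    have hDmem : ∀ i, D i ∈ 𝒟 := fun i => (e i).2
    have hDinj : Function.Injective D := fun i j h => e.injective (Subtype.ext h)
    have hDdisj : ∀ i j, i ≠ j → Disjoint (D i) (D j) := fun i j hij =>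
      hD0pd (hDmem i).1 (hDmem j).1 fun h => hij (hDinj h)
    have hDS : ∀ i, D i ∈ 𝒮 := fun i => hD0S (hDmem i).1
    have hDne : ∀ i, (D i).Nonempty := fun i =>
      Finset.nonempty_iff_ne_empty.mpr (hDmem i).2
    set g : Stream' MU := fun i => some (D i) with hgdef
    have hg : ∀ i, g.get i = some (D i) := fun i => rfl
    set cls : Fin (r + 2) → Set MU :=
      fun j => {m | m ∈ Hindman.FP g ∧ ∃ x, m = some x ∧ c x = j} with hcls
    have hcov : Hindman.FP g ⊆ ⋃₀ Set.range cls := by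
      intro m hm
      obtain ⟨s, hs, -, rfl⟩ := FP_good hDdisj hm id Function.injective_id fun i => rfl
      exact ⟨cls (c (s.sup D)), ⟨_, rfl⟩, hm, _, rfl, rfl⟩
    obtain ⟨C, hC, b, hb⟩ :=
      Hindman.FP_partition_regular g (Set.range cls) (Set.finite_range cls) hcov
    obtain ⟨j, rfl⟩ := hC
    have hbFP : Hindman.FP b ⊆ Hindman.FP g := fun m hm => (hb hm).1
    choose X hX1 hX2 using fun i => (hb (Hindman.FP.singleton b i)).2
    have hXdisj : ∀ i k, i ≠ k → Disjoint (X i) (X k) := by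
      have key : ∀ i k, i < k → Disjoint (X i) (X k) := by
        intro i k hik
        have hm := hbFP (Hindman.FP.mul_two b i k hik)
        rw [hX1 i, hX1 k] at hm
        by_contra hnd
        rw [MU.some_mul_some, if_neg hnd] at hm
        obtain ⟨s, -, -, h⟩ := FP_good hDdisj hm id Function.injective_id fun i => rfl
        cases h
      intro i k hik
      rcases Nat.lt_or_ge i k with h | h
      · exact key i k h
      · exact (key k i (lt_of_le_of_ne h (Ne.symm hik))).symm
    have hXsup : ∀ i, ∃ s : Finset ℕ, s.Nonempty ∧ X i = s.sup D := by
      intro i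
      have hm := hbFP (Hindman.FP.singleton b i)
      rw [hX1 i] at hm
      obtain ⟨s, hs, -, h⟩ := FP_good hDdisj hm id Function.injective_id fun i => rfl
      exact ⟨s, hs, Option.some.inj h⟩
    have hXS : ∀ i, X i ∈ 𝒮 := by
      intro i
      obtain ⟨s, hs, heq⟩ := hXsup i
      rw [heq]
      exact sup_mem_of_closed hcl D s hs fun k _ => hDS k
    have hXne : ∀ i, (X i).Nonempty := by
      intro i
      obtain ⟨s, ⟨k, hk⟩, heq⟩ := hXsup i
      rw [heq]
      exact (hDne k).mono (Finset.le_sup hk)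
    have hXinj : Function.Injective X := by
      intro i k h
      by_contra hne
      have := hXdisj i k hne
      rw [h, disjoint_self] at this
      exact Finset.nonempty_iff_ne_empty.mp (hXne k) this
    set 𝒮' : Set (Finset ℕ) := {T | ∃ I : Finset ℕ, I.Nonempty ∧ T = I.sup X} with h𝒮'
    have hsupFP : ∀ T ∈ 𝒮', (some T : MU) ∈ Hindman.FP b := by
      rintro T ⟨I, hI, rfl⟩
      exact sup_mem_FP b X hX1 hXdisj I hI
    have h𝒮'S : 𝒮' ⊆ 𝒮 := by
      intro T hT
      have hm := hbFP (hsupFP T hT)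
      obtain ⟨s, hs, -, h⟩ := FP_good hDdisj hm id Function.injective_id fun i => rfl
      rw [Option.some.inj h]
      exact sup_mem_of_closed hcl D s hs fun k _ => hDS k
    have hcolor : ∀ T ∈ 𝒮', c T = j := by
      intro T hT
      obtain ⟨-, x, hx, hcx⟩ := hb (hsupFP T hT)
      rwa [Option.some.inj hx]
    have h𝒮'cl : ∀ A ∈ 𝒮', ∀ B ∈ 𝒮', A ∪ B ∈ 𝒮' := by
      rintro A ⟨I1, hI1, rfl⟩ B ⟨I2, hI2, rfl⟩
      refine ⟨I1 ∪ I2, hI1.mono Finset.subset_union_left, ?_⟩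
      rw [Finset.sup_union]
      rfl
    obtain ⟨i, hi⟩ := exists_ne j
    refine ⟨𝒮', h𝒮'S, ⟨h𝒮'cl, Set.range X, ?_, Set.infinite_range_of_injective hXinj, ?_⟩,
      i, ?_⟩
    · rintro x ⟨k, rfl⟩
      exact ⟨{k}, Finset.singleton_nonempty _, (Finset.sup_singleton).symm⟩
    · rintro x ⟨i1, rfl⟩ y ⟨i2, rfl⟩ hxy
      exact hXdisj i1 i2 fun h => hxy (congrArg X h)
    · intro S hS hcS
      have hcj : c S = j := hcolor S (NU_subset_of_closed h𝒮'cl hS)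
      rw [hcj] at hcS
      exact hi hcS.symm
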